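/- Let A_d(k) = k if k ≤ d+1 and A_d(k) = d·C(k-1,d)+1 otherwise, and B_d(k) = k(A_d(k)-1)+1. If F = {X_1, …, X_m} is a family of finite sets in ℝ^d such that for every non-empty I ⊆ {1,…,m}, the union ∪_{i∈I} X_i contains at least B_d(|I|) points in general position, then there exist points x_i ∈ X_i for each i such that {x_1,…,x_m} is in general position. -/
import Mathlib


open Metric Finset
open scoped Classical

noncomputable section

/-- Inserting a point outside the affine span preserves affine independence. -/
theorem aff_insert' {k V P : Type*} [DivisionRing k] [AddCommGroup V] [Module k V]
    [AddTorsor V P] [DecidableEq P] {s : Finset P} {x : P}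
    (hs : AffineIndependent k (fun y : s => (y : P)))
    (hx : x ∉ affineSpan k (s : Set P)) :
    AffineIndependent k (fun y : (insert x s : Finset P) => (y : P)) := by
  have hxs : x ∈ insert x s := Finset.mem_insert_self _ _
  have hval : ∀ y : { y : (insert x s : Finset P) // y ≠ ⟨x, hxs⟩ }, (y.1.1 : P) ∈ s := by
    intro y
    rcases Finset.mem_insert.1 y.1.2 with h | h
    · exact absurd (Subtype.ext h) y.2
    · exact h
  have hinj : Function.Injective
      (fun y : { y : (insert x s : Finset P) // y ≠ ⟨x, hxs⟩ } => (⟨y.1.1, hval y⟩ : s)) := by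
    intro a b hab
    simp only [Subtype.mk.injEq] at hab
    ext1; ext1
    exact hab
  apply AffineIndependent.affineIndependent_of_notMem_span
    (i := (⟨x, hxs⟩ : (insert x s : Finset P)))
  · exact hs.comp_embedding ⟨_, hinj⟩
  · intro hmem
    apply hx
    refine (affineSpan_mono k ?_) hmem
    rintro v ⟨y, hy, rfl⟩
    exact hval ⟨y, hy⟩

/-- Affinely independent points inside the affine span of `Q` number at most `Q.card`. -/
theorem card_le_of_subset_span' {d : ℕ} (R Q : Finset (EuclideanSpace ℝ (Fin d)))
    (hRQ : (R : Set (EuclideanSpace ℝ (Fin d))) ⊆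
      (affineSpan ℝ (Q : Set (EuclideanSpace ℝ (Fin d))) : Set (EuclideanSpace ℝ (Fin d))))
    (hR : AffineIndependent ℝ (fun y : R => (y : EuclideanSpace ℝ (Fin d)))) :
    R.card ≤ Q.card := by
  rcases Q.eq_empty_or_nonempty with rfl | hQ
  · simp only [coe_empty, AffineSubspace.span_empty, AffineSubspace.bot_coe,
      Set.subset_empty_iff, coe_eq_empty] at hRQ
    simp [hRQ]
  rcases R.eq_empty_or_nonempty with rfl | hRne
  · simp
  obtain ⟨n, hn⟩ : ∃ n, R.card = n + 1 :=
    ⟨R.card - 1, (Nat.succ_pred_eq_of_pos (card_pos.2 hRne)).symm⟩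
  obtain ⟨q, hq⟩ : ∃ q, Q.card = q + 1 :=
    ⟨Q.card - 1, (Nat.succ_pred_eq_of_pos (card_pos.2 hQ)).symm⟩
  have hfR : Module.finrank ℝ (vectorSpan ℝ (R : Set (EuclideanSpace ℝ (Fin d)))) = n := by
    have := hR.finrank_vectorSpan (by rw [Fintype.card_coe]; exact hn)
    rwa [Subtype.range_coe_subtype] at this
  have hfQ : Module.finrank ℝ (vectorSpan ℝ (Q : Set (EuclideanSpace ℝ (Fin d)))) ≤ q := by
    have := finrank_vectorSpan_range_le ℝ (fun y : Q => (y : EuclideanSpace ℝ (Fin d)))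
      (by rw [Fintype.card_coe]; exact hq)
    rwa [Subtype.range_coe_subtype] at this
  have hle : vectorSpan ℝ (R : Set (EuclideanSpace ℝ (Fin d))) ≤
      vectorSpan ℝ (Q : Set (EuclideanSpace ℝ (Fin d))) := by
    rw [← direction_affineSpan ℝ (Q : Set (EuclideanSpace ℝ (Fin d)))]
    exact vectorSpan_mono ℝ hRQ |>.trans (by rw [AffineSubspace.direction_eq_vectorSpan])
  have := Submodule.finrank_mono hle
  omega

/-- A finite set in `ℝ^d` is in general position if every subset of size at most `d+1`
is affinely independent. -/
def InGenPos (d : ℕ) (X : Finset (EuclideanSpace ℝ (Fin d))) : Prop :=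
  ∀ S ⊆ X, S.card ≤ d + 1 →
    AffineIndependent ℝ (fun p : S => (p : EuclideanSpace ℝ (Fin d)))

/-- `A_d(k)` from the paper. -/
def A (d k : ℕ) : ℕ := if k ≤ d + 1 then k else d * Nat.choose (k - 1) d + 1

/-- `B_d(k) = k(A_d(k)-1)+1` from the paper. -/
def B (d k : ℕ) : ℕ := k * (A d k - 1) + 1

theorem genpos_mono {d : ℕ} {X S : Finset (EuclideanSpace ℝ (Fin d))}
    (h : InGenPos d X) (hs : S ⊆ X) : InGenPos d S :=
  fun T hT hc => h T (hT.trans hs) hc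

theorem genpos_insert {d : ℕ} {P : Finset (EuclideanSpace ℝ (Fin d))} (hP : InGenPos d P)
    {t : EuclideanSpace ℝ (Fin d)}
    (ht : ∀ Q ⊆ P, Q.card ≤ d →
      t ∉ affineSpan ℝ (Q : Set (EuclideanSpace ℝ (Fin d)))) :
    InGenPos d (insert t P) := by
  intro S hS hcard
  by_cases hts : t ∈ S
  · have hQP : S.erase t ⊆ P := by
      intro a ha
      have h1 := Finset.mem_of_mem_erase ha
      have h2 := Finset.ne_of_mem_erase ha
      rcases Finset.mem_insert.1 (hS h1) with h | h
      · exact absurd h h2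
      · exact h
    have hQcard : (S.erase t).card ≤ d := by
      have := Finset.card_erase_of_mem hts
      omega
    have hQind : AffineIndependent ℝ
        (fun y : (S.erase t) => (y : EuclideanSpace ℝ (Fin d))) :=
      hP (S.erase t) hQP (hQcard.trans (Nat.le_succ d))
    have h4 : insert t (S.erase t) = S := Finset.insert_erase hts
    rw [← h4]
    exact aff_insert' (x := t) hQind (ht (S.erase t) hQP hQcard)
  · have hSP : S ⊆ P := by
      intro a ha
      rcases Finset.mem_insert.1 (hS ha) with h | h
      · exact absurd (h ▸ ha) hts
      · exact h
    exact hP S hSP hcard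

theorem stmt2_aux (d : ℕ) (hd : 1 ≤ d) : ∀ m : ℕ,
    ∀ X : Fin m → Finset (EuclideanSpace ℝ (Fin d)),
    (∀ I : Finset (Fin m), I.Nonempty →
      ∃ S ⊆ I.biUnion X, InGenPos d S ∧ B d I.card ≤ S.card) →
    ∃ x : Fin m → EuclideanSpace ℝ (Fin d),
      (∀ i, x i ∈ X i) ∧ Function.Injective x ∧
        InGenPos d (Finset.image x Finset.univ) := by
  intro m
  induction m with
  | zero =>
    intro X _
    refine ⟨fun i => i.elim0, fun i => i.elim0, fun i => i.elim0, ?_⟩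
    intro S hS _
    have hSe : S = ∅ := Finset.subset_empty.1 (by simpa using hS)
    subst hSe
    exact affineIndependent_of_subsingleton ℝ _
  | succ m ih =>
    intro X hyp
    obtain ⟨S, hSsub, hSgp, hScard⟩ := hyp Finset.univ ⟨0, Finset.mem_univ 0⟩
    rw [Finset.card_univ, Fintype.card_fin] at hScard
    -- pigeonhole
    obtain ⟨i, hi⟩ : ∃ i, A d (m + 1) ≤ (S ∩ X i).card := by
      by_contra hc
      push_neg at hc
      have hsub : S ⊆ Finset.univ.biUnion (fun i => S ∩ X i) := by
        intro a ha
        obtain ⟨j, hj, haj⟩ := Finset.mem_biUnion.1 (hSsub ha)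
        exact Finset.mem_biUnion.2 ⟨j, hj, Finset.mem_inter.2 ⟨ha, haj⟩⟩
      have h1 : S.card ≤ ∑ j : Fin (m + 1), (S ∩ X j).card :=
        (Finset.card_le_card hsub).trans Finset.card_biUnion_le
      have h2 : ∑ j : Fin (m + 1), (S ∩ X j).card ≤ (m + 1) * (A d (m + 1) - 1) := by
        calc ∑ j : Fin (m + 1), (S ∩ X j).card
            ≤ ∑ _j : Fin (m + 1), (A d (m + 1) - 1) :=
              Finset.sum_le_sum (fun j _ => by have := hc j; omega)
          _ = (m + 1) * (A d (m + 1) - 1) := by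
              rw [Finset.sum_const, Finset.card_univ, Fintype.card_fin, smul_eq_mul]
      have hB : B d (m + 1) = (m + 1) * (A d (m + 1) - 1) + 1 := rfl
      omega
    -- the subfamily omitting `i`
    set Y : Fin m → Finset (EuclideanSpace ℝ (Fin d)) := fun j => X (i.succAbove j) with hY
    have hypY : ∀ I : Finset (Fin m), I.Nonempty →
        ∃ S ⊆ I.biUnion Y, InGenPos d S ∧ B d I.card ≤ S.card := by
      intro I hI
      obtain ⟨S', h1, h2, h3⟩ :=
        hyp (I.map ⟨i.succAbove, Fin.succAbove_right_injective⟩) hI.map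
      rw [Finset.card_map] at h3
      refine ⟨S', ?_, h2, h3⟩
      have heq : (I.map ⟨i.succAbove, Fin.succAbove_right_injective⟩).biUnion X
          = I.biUnion Y := by
        ext a
        simp [Finset.mem_biUnion, hY]
      rwa [heq] at h1
    obtain ⟨x', hx'mem, hx'inj, hx'gp⟩ := ih Y hypY
    set P := Finset.image x' Finset.univ with hPdef
    have hPcard : P.card = m := by
      rw [hPdef, Finset.card_image_of_injective _ hx'inj, Finset.card_univ, Fintype.card_fin]
    set T := S ∩ X i with hT
    have hTgp : InGenPos d T := genpos_mono hSgp Finset.inter_subset_left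
    set q := min d m with hq
    have hA : q * Nat.choose m q + 1 ≤ A d (m + 1) := by
      unfold A
      rcases le_or_gt m d with h | h
      · rw [if_pos (by omega)]
        have hqm : q = m := min_eq_right h
        simp [hqm, Nat.choose_self]
      · rw [if_neg (by omega)]
        have hqd : q = d := min_eq_left (by omega)
        simp [hqd]
    set bad := T.filter (fun t => ∃ Q ∈ P.powersetCard q,
      t ∈ affineSpan ℝ (Q : Set (EuclideanSpace ℝ (Fin d)))) with hbad
    have hbadcard : bad.card ≤ Nat.choose m q * q := by
      have hsub : bad ⊆ (P.powersetCard q).biUnion (fun Q => T.filter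
          (fun t => t ∈ affineSpan ℝ (Q : Set (EuclideanSpace ℝ (Fin d))))) := by
        intro a ha
        rw [hbad, Finset.mem_filter] at ha
        obtain ⟨haT, Q, hQ, haQ⟩ := ha
        exact Finset.mem_biUnion.2 ⟨Q, hQ, Finset.mem_filter.2 ⟨haT, haQ⟩⟩
      refine (Finset.card_le_card hsub).trans (Finset.card_biUnion_le.trans ?_)
      have hbound : ∀ Q ∈ P.powersetCard q, (T.filter
          (fun t => t ∈ affineSpan ℝ (Q : Set (EuclideanSpace ℝ (Fin d))))).card ≤ q := by
        intro Q hQ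
        rw [Finset.mem_powersetCard] at hQ
        by_contra hgt
        push_neg at hgt
        obtain ⟨R, hRsub, hRcard⟩ := Finset.exists_subset_card_eq (n := q + 1) hgt
        have hRT : R ⊆ T := hRsub.trans (Finset.filter_subset _ _)
        have hRind := hTgp R hRT (by have : q ≤ d := min_le_left d m; omega)
        have hRin : (R : Set (EuclideanSpace ℝ (Fin d))) ⊆
            (affineSpan ℝ (Q : Set (EuclideanSpace ℝ (Fin d))) :
              Set (EuclideanSpace ℝ (Fin d))) := by
          intro a ha
          have haR : a ∈ R := ha
          exact (Finset.mem_filter.1 (hRsub haR)).2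
        have := card_le_of_subset_span' R Q hRin hRind
        omega
      calc ∑ Q ∈ P.powersetCard q, (T.filter
            (fun t => t ∈ affineSpan ℝ (Q : Set (EuclideanSpace ℝ (Fin d))))).card
          ≤ ∑ _Q ∈ P.powersetCard q, q := Finset.sum_le_sum hbound
        _ = (P.powersetCard q).card * q := by rw [Finset.sum_const, smul_eq_mul]
        _ = Nat.choose m q * q := by rw [Finset.card_powersetCard, hPcard]
    obtain ⟨t, htT, htbad⟩ : ∃ t ∈ T, t ∉ bad := by
      by_contra hc
      push_neg at hc
      have h5 : A d (m + 1) ≤ Nat.choose m q * q :=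
        hi.trans ((Finset.card_le_card (fun a ha => hc a ha)).trans hbadcard)
      rw [Nat.mul_comm] at h5
      omega
    have htspan : ∀ Q ⊆ P, Q.card ≤ d →
        t ∉ affineSpan ℝ (Q : Set (EuclideanSpace ℝ (Fin d))) := by
      intro Q hQP hQd hmem
      apply htbad
      rw [hbad, Finset.mem_filter]
      refine ⟨htT, ?_⟩
      have hQq : Q.card ≤ q :=
        le_min hQd (le_trans (Finset.card_le_card hQP) hPcard.le)
      obtain ⟨Q', hQQ', hQ'P, hQ'card⟩ := Finset.exists_subsuperset_card_eq hQP hQq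
        (by rw [hPcard]; exact min_le_right d m)
      refine ⟨Q', Finset.mem_powersetCard.2 ⟨hQ'P, hQ'card⟩, ?_⟩
      exact affineSpan_mono ℝ (by exact_mod_cast hQQ') hmem
    have htP : t ∉ P := by
      intro htP
      refine htspan {t} (by simpa using htP) (by simpa using hd) ?_
      apply mem_affineSpan
      simp
    -- construct the representatives
    refine ⟨i.insertNth t x', ?_, ?_, ?_⟩
    · intro j
      rcases eq_or_ne j i with hji | hji
      · rw [hji, Fin.insertNth_apply_same]
        exact (Finset.mem_inter.1 htT).2
      · obtain ⟨k, hk⟩ := Fin.exists_succAbove_eq hji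
        rw [← hk, Fin.insertNth_apply_succAbove]
        exact hx'mem k
    · intro a b hab
      by_contra hne
      rcases eq_or_ne a i with ha | ha <;> rcases eq_or_ne b i with hb | hb
      · exact hne (ha.trans hb.symm)
      · obtain ⟨k, hk⟩ := Fin.exists_succAbove_eq hb
        rw [ha, Fin.insertNth_apply_same, ← hk, Fin.insertNth_apply_succAbove] at hab
        exact htP (by rw [hab]; exact Finset.mem_image.2 ⟨k, Finset.mem_univ _, rfl⟩)
      · obtain ⟨k, hk⟩ := Fin.exists_succAbove_eq ha
        rw [hb, Fin.insertNth_apply_same, ← hk, Fin.insertNth_apply_succAbove] at hab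
        exact htP (by rw [← hab]; exact Finset.mem_image.2 ⟨k, Finset.mem_univ _, rfl⟩)
      · obtain ⟨k1, hk1⟩ := Fin.exists_succAbove_eq ha
        obtain ⟨k2, hk2⟩ := Fin.exists_succAbove_eq hb
        rw [← hk1, ← hk2, Fin.insertNth_apply_succAbove, Fin.insertNth_apply_succAbove] at hab
        exact hne (by rw [← hk1, ← hk2, hx'inj hab])
    · have himg : Finset.image (i.insertNth t x') Finset.univ = insert t P := by
        ext a
        constructor
        · intro ha
          obtain ⟨j, -, rfl⟩ := Finset.mem_image.1 ha
          rcases eq_or_ne j i with hji | hji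
          · rw [hji, Fin.insertNth_apply_same]
            exact Finset.mem_insert_self _ _
          · obtain ⟨k, hk⟩ := Fin.exists_succAbove_eq hji
            rw [← hk, Fin.insertNth_apply_succAbove]
            exact Finset.mem_insert_of_mem
              (Finset.mem_image.2 ⟨k, Finset.mem_univ _, rfl⟩)
        · intro ha
          rcases Finset.mem_insert.1 ha with rfl | haP
          · exact Finset.mem_image.2 ⟨i, Finset.mem_univ _, Fin.insertNth_apply_same _ _ _⟩
          · obtain ⟨k, -, rfl⟩ := Finset.mem_image.1 haP
            exact Finset.mem_image.2 ⟨i.succAbove k, Finset.mem_univ _,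
              Fin.insertNth_apply_succAbove _ _ _ _⟩
      rw [himg]
      exact genpos_insert hx'gp htspan

/-- If every union `∪_{i∈I} X_i` contains at least `B_d(|I|)` points in general
position, then the family has a system of general position representatives. -/
theorem stmt2 (d m : ℕ) (hd : 1 ≤ d)
    (X : Fin m → Finset (EuclideanSpace ℝ (Fin d)))
    (hyp : ∀ I : Finset (Fin m), I.Nonempty →
      ∃ S ⊆ I.biUnion X, InGenPos d S ∧ B d I.card ≤ S.card) :
    ∃ x : Fin m → EuclideanSpace ℝ (Fin d),
      (∀ i, x i ∈ X i) ∧ Function.Injective x ∧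
        InGenPos d (Finset.image x Finset.univ) := by
  exact stmt2_aux d hd m X hyp
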